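/- The triangle P with vertices (3,2), (−1,2), (−1,−2) has dual polygon P* with denominator 2 (2P* is a lattice polygon but P* is not), and the Ehrhart quasi-polynomial of P* is the honest polynomial L_{P*}(k) = k² + k + 1. -/

import Mathlib

open Pointwise

/-- A set in ℚ² is a lattice polytope if it is the convex hull of finitely many
integer points. -/
def IsLatticePolytope (A : Set (ℚ × ℚ)) : Prop :=
  ∃ S : Finset (ℤ × ℤ), A = convexHull ℚ ((fun p : ℤ × ℤ => ((p.1 : ℚ), (p.2 : ℚ))) '' ↑S)

section Counting

def cons (m : ℤ) (p : ℤ × ℤ) : Prop :=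
  3*p.1+2*p.2 ≥ -m ∧ -p.1+2*p.2 ≥ -m ∧ -p.1-2*p.2 ≥ -m

instance (m : ℤ) (p : ℤ × ℤ) : Decidable (cons m p) := by unfold cons; infer_instance

noncomputable def F (k : ℕ) : Finset (ℤ × ℤ) :=
  ((Finset.Icc (-(k:ℤ)) k) ×ˢ (Finset.Icc (-(k:ℤ)) k)).filter (fun p => cons k p)

lemma mem_F (k : ℕ) (p : ℤ × ℤ) : p ∈ F k ↔ cons k p := by
  rw [F, Finset.mem_filter]
  simp only [F, Finset.mem_filter, Finset.mem_product, Finset.mem_Icc, cons]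
  omega

lemma card_F_zero : (F 0).card = 1 := by
  have : F 0 = {((0:ℤ),(0:ℤ))} := by
    ext p
    rw [mem_F, Finset.mem_singleton, Prod.ext_iff, cons]
    omega
  simp [this]

noncomputable def Am (m : ℤ) : Finset (ℤ × ℤ) := (Finset.Icc (0:ℤ) m).image (fun y => (m - 2*y, y))
noncomputable def Bm (m : ℤ) : Finset (ℤ × ℤ) := (Finset.Icc (-(m/2)) (-1:ℤ)).image (fun y => (2*y + m, y))
noncomputable def Cm (m : ℤ) : Finset (ℤ × ℤ) := (Finset.Icc (1:ℤ) ((m-1)/2)).image (fun j => (-m + 2*j, m - 3*j))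

lemma mem_Am (m : ℤ) (p : ℤ × ℤ) :
    p ∈ Am m ↔ ∃ y, (0 ≤ y ∧ y ≤ m) ∧ m - 2*y = p.1 ∧ y = p.2 := by
  simp [Am, Finset.mem_image, Finset.mem_Icc, Prod.ext_iff]

lemma mem_Bm (m : ℤ) (p : ℤ × ℤ) :
    p ∈ Bm m ↔ ∃ y, (-(m/2) ≤ y ∧ y ≤ -1) ∧ 2*y + m = p.1 ∧ y = p.2 := by
  simp [Bm, Finset.mem_image, Finset.mem_Icc, Prod.ext_iff]

lemma mem_Cm (m : ℤ) (p : ℤ × ℤ) :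
    p ∈ Cm m ↔ ∃ j, (1 ≤ j ∧ j ≤ (m-1)/2) ∧ -m + 2*j = p.1 ∧ m - 3*j = p.2 := by
  simp [Cm, Finset.mem_image, Finset.mem_Icc, Prod.ext_iff]

lemma F_succ (k : ℕ) : F (k+1) = F k ∪ (Am (k+1) ∪ Bm (k+1) ∪ Cm (k+1)) := by
  ext p
  rw [Finset.mem_union, Finset.mem_union, Finset.mem_union, mem_F, mem_F,
    mem_Am, mem_Bm, mem_Cm, cons, cons]
  push_cast
  constructor
  · intro h
    by_cases hk : 3*p.1+2*p.2 ≥ -(k:ℤ) ∧ -p.1+2*p.2 ≥ -(k:ℤ) ∧ -p.1-2*p.2 ≥ -(k:ℤ)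
    · exact Or.inl hk
    · right
      by_cases h3 : -p.1-2*p.2 = -((k:ℤ)+1)
      · exact Or.inl (Or.inl ⟨by omega, by omega⟩)
      · by_cases h2 : -p.1+2*p.2 = -((k:ℤ)+1)
        · exact Or.inl (Or.inr ⟨by omega, by omega⟩)
        · have h1 : 3*p.1+2*p.2 = -((k:ℤ)+1) := by omega
          exact Or.inr ⟨(p.1 + (k+1))/2, by omega, by omega, by omega⟩
  · rintro (h | ((⟨y, hy, hx, rfl⟩ | ⟨y, hy, hx, rfl⟩) | ⟨j, hj, hx, hy⟩)) <;> omega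

lemma card_ABC (k : ℕ) : (Am (k+1) ∪ Bm (k+1) ∪ Cm (k+1)).card = 2*k+2 := by
  set m : ℤ := (k:ℤ)+1 with hm
  have hA : (Am m).card = (m+1).toNat := by
    rw [Am, Finset.card_image_of_injective _ (fun a b h => by simpa using (Prod.ext_iff.mp h).2),
      Int.card_Icc]
    omega
  have hB : (Bm m).card = (m/2).toNat := by
    rw [Bm, Finset.card_image_of_injective _ (fun a b h => by simpa using (Prod.ext_iff.mp h).2),
      Int.card_Icc]
    omega
  have hC : (Cm m).card = ((m-1)/2).toNat := by
    rw [Cm, Finset.card_image_of_injective _ (fun a b h => by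
      have := (Prod.ext_iff.mp h).1; omega), Int.card_Icc]
    omega
  have hAB : Disjoint (Am m) (Bm m) := by
    rw [Finset.disjoint_left]
    intro p hp hq
    rw [mem_Am] at hp; rw [mem_Bm] at hq
    obtain ⟨y, hy, hx, hyy⟩ := hp; obtain ⟨y', hy', hx', hyy'⟩ := hq
    omega
  have hABC : Disjoint (Am m ∪ Bm m) (Cm m) := by
    rw [Finset.disjoint_left]
    intro p hp hq
    rw [Finset.mem_union, mem_Am, mem_Bm] at hp; rw [mem_Cm] at hq
    obtain ⟨j, hj, hx, hyy⟩ := hq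
    rcases hp with ⟨y, hy, hx', hyy'⟩ | ⟨y, hy, hx', hyy'⟩ <;> omega
  rw [Finset.card_union_of_disjoint hABC, Finset.card_union_of_disjoint hAB, hA, hB, hC]
  have hm1 : (1:ℤ) ≤ m := by omega
  omega

lemma disj_F_ABC (k : ℕ) : Disjoint (F k) (Am (k+1) ∪ Bm (k+1) ∪ Cm (k+1)) := by
  rw [Finset.disjoint_left]
  intro p hp hq
  rw [mem_F, cons] at hp
  rw [Finset.mem_union, Finset.mem_union, mem_Am, mem_Bm, mem_Cm] at hq
  rcases hq with (⟨y, hy, hx, hyy⟩ | ⟨y, hy, hx, hyy⟩) | ⟨j, hj, hx, hyy⟩ <;> omega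

lemma card_F (k : ℕ) : (F k).card = k^2 + k + 1 := by
  induction k with
  | zero => simpa using card_F_zero
  | succ n ih =>
    rw [F_succ, Finset.card_union_of_disjoint (disj_F_ABC n), ih, card_ABC]
    ring

end Counting

section Geometry

def PdSet : Set (ℚ × ℚ) :=
  {u | 3*u.1+2*u.2 ≥ -1 ∧ -u.1+2*u.2 ≥ -1 ∧ -u.1-2*u.2 ≥ -1}

lemma linmap (a b : ℚ) : IsLinearMap ℚ (fun v : ℚ × ℚ => a*v.1 + b*v.2) := by
  constructor
  · intro x y; simp [Prod.fst_add, Prod.snd_add]; ring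
  · intro c x; simp [Prod.smul_fst, Prod.smul_snd, smul_eq_mul]; ring

lemma halfplane_convex (a b r : ℚ) : Convex ℚ {v : ℚ × ℚ | a*v.1 + b*v.2 ≥ r} :=
  convex_halfSpace_ge (linmap a b) r

lemma tri_convex (r : ℚ) :
    Convex ℚ {u : ℚ × ℚ | 3*u.1+2*u.2 ≥ r ∧ -u.1+2*u.2 ≥ r ∧ -u.1-2*u.2 ≥ r} := by
  have h1 := halfplane_convex 3 2 r
  have h2 := halfplane_convex (-1) 2 r
  have h3 := halfplane_convex (-1) (-2) r
  have heq : {u : ℚ × ℚ | 3*u.1+2*u.2 ≥ r ∧ -u.1+2*u.2 ≥ r ∧ -u.1-2*u.2 ≥ r} =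
      {v : ℚ × ℚ | 3*v.1 + 2*v.2 ≥ r} ∩
      ({v | (-1)*v.1 + 2*v.2 ≥ r} ∩ {v | (-1)*v.1 + (-2)*v.2 ≥ r}) := by
    ext v; simp only [Set.mem_setOf_eq, Set.mem_inter_iff]
    constructor <;> intro h <;> refine ⟨by linarith [h.1], by linarith [h.2.1], by linarith [h.2.2]⟩
  rw [heq]
  exact h1.inter (h2.inter h3)

lemma PdSet_convex : Convex ℚ PdSet := tri_convex (-1)

lemma Pd_eq :
    {u : ℚ × ℚ | ∀ v ∈ convexHull ℚ {((3 : ℚ), (2 : ℚ)), (-1, 2), (-1, -2)},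
      u.1 * v.1 + u.2 * v.2 ≥ -1} = PdSet := by
  ext u
  simp only [Set.mem_setOf_eq, PdSet]
  constructor
  · intro h
    have h1 := h (3, 2) (subset_convexHull ℚ _ (by simp))
    have h2 := h (-1, 2) (subset_convexHull ℚ _ (by simp))
    have h3 := h (-1, -2) (subset_convexHull ℚ _ (by simp))
    simp only at h1 h2 h3
    refine ⟨by linarith, by linarith, by linarith⟩
  · intro h v hv
    have hsub : convexHull ℚ {((3 : ℚ), (2 : ℚ)), (-1, 2), (-1, -2)} ⊆
        {v : ℚ × ℚ | u.1*v.1 + u.2*v.2 ≥ -1} := by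
      apply convexHull_min
      · intro w hw
        simp only [Set.mem_insert_iff, Set.mem_singleton_iff] at hw
        rcases hw with rfl | rfl | rfl <;> simp only [Set.mem_setOf_eq] <;>
          obtain ⟨ha, hb, hc⟩ := h <;> linarith
      · exact halfplane_convex u.1 u.2 (-1)
    exact hsub hv

lemma combo_mem {s : Set (ℚ×ℚ)} {p q r : ℚ×ℚ} (hp : p ∈ s) (hq : q ∈ s) (hr : r ∈ s)
    {a b c : ℚ} (ha : 0 ≤ a) (hb : 0 ≤ b) (hc : 0 ≤ c) (habc : a+b+c = 1) :
    a•p + b•q + c•r ∈ convexHull ℚ s := by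
  have key := Finset.centerMass_mem_convexHull (t := (Finset.univ : Finset (Fin 3)))
    (w := ![a,b,c]) (z := ![p,q,r]) (fun i _ => by fin_cases i <;> simpa)
    (by rw [Fin.sum_univ_three]; simp; linarith)
    (fun i _ => by fin_cases i <;> simpa)
  rwa [Finset.centerMass_eq_of_sum_1, Fin.sum_univ_three] at key
  · rw [Fin.sum_univ_three]; simpa using habc

lemma two_smul_Pd :
    (2 : ℚ) • PdSet = convexHull ℚ {((0:ℚ),(-1:ℚ)), (-2, 2), (2, 0)} := by
  have hmem : ∀ u : ℚ × ℚ, u ∈ (2:ℚ) • PdSet ↔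
      (3*u.1+2*u.2 ≥ -2 ∧ -u.1+2*u.2 ≥ -2 ∧ -u.1-2*u.2 ≥ -2) := by
    intro u
    rw [Set.mem_smul_set_iff_inv_smul_mem₀ (by norm_num : (2:ℚ) ≠ 0)]
    have : (2:ℚ)⁻¹ • u = (u.1/2, u.2/2) := by
      rw [Prod.ext_iff]
      constructor <;> simp [Prod.smul_fst, Prod.smul_snd, smul_eq_mul] <;> ring
    rw [this]
    simp only [PdSet, Set.mem_setOf_eq]
    constructor <;> intro h <;> refine ⟨by linarith [h.1], by linarith [h.2.1], by linarith [h.2.2]⟩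
  apply Set.eq_of_subset_of_subset
  · intro u hu
    rw [hmem] at hu
    obtain ⟨h1, h2, h3⟩ := hu
    have key : u = ((2-u.1-2*u.2)/4) • ((0:ℚ),(-1:ℚ)) + ((2-u.1+2*u.2)/8) • ((-2:ℚ),(2:ℚ))
        + ((3*u.1+2*u.2+2)/8) • ((2:ℚ),(0:ℚ)) := by
      rw [Prod.ext_iff]
      constructor <;> simp [Prod.smul_fst, Prod.smul_snd, smul_eq_mul] <;> ring
    rw [key]
    refine combo_mem (p := ((0:ℚ),(-1:ℚ))) (q := ((-2:ℚ),(2:ℚ))) (r := ((2:ℚ),(0:ℚ)))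
      (a := (2-u.1-2*u.2)/4) (b := (2-u.1+2*u.2)/8) (c := (3*u.1+2*u.2+2)/8)
      (Set.mem_insert _ _)
      (Set.mem_insert_of_mem _ (Set.mem_insert _ _))
      (Set.mem_insert_of_mem _ (Set.mem_insert_of_mem _ (Set.mem_singleton _)))
      (by linarith) (by linarith) (by linarith) (by ring)
  · apply convexHull_min
    · intro w hw
      simp only [Set.mem_insert_iff, Set.mem_singleton_iff] at hw
      rcases hw with rfl | rfl | rfl <;> exact (hmem _).mpr (by norm_num)
    · have : (2:ℚ) • PdSet = {u : ℚ × ℚ | 3*u.1+2*u.2 ≥ -2 ∧ -u.1+2*u.2 ≥ -2 ∧ -u.1-2*u.2 ≥ -2} := by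
        ext u; exact hmem u
      rw [this]
      exact tri_convex (-2)

lemma not_lattice_Pd : ¬ IsLatticePolytope PdSet := by
  rintro ⟨S, hS⟩
  have himg : (fun p : ℤ × ℤ => ((p.1 : ℚ), (p.2 : ℚ))) '' ↑S ⊆ {v : ℚ × ℚ | 0*v.1 + 1*v.2 ≥ 0} := by
    rintro q ⟨p, hp, rfl⟩
    have hqPd : ((p.1:ℚ), (p.2:ℚ)) ∈ PdSet := by
      rw [hS]; exact subset_convexHull ℚ _ ⟨p, hp, rfl⟩
    obtain ⟨h1, h2, h3⟩ := hqPd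
    simp only [Set.mem_setOf_eq]
    have hge : ((p.2:ℚ)) ≥ -1/2 := by
      simp only at h1 h2
      linarith
    have : (p.2 : ℤ) ≥ 0 := by
      by_contra hneg
      push_neg at hneg
      have h21 : p.2 ≤ -1 := by omega
      have : (p.2 : ℚ) ≤ -1 := by exact_mod_cast h21
      linarith
    have : (0:ℚ) ≤ (p.2:ℚ) := by exact_mod_cast this
    linarith
  have hsub : PdSet ⊆ {v : ℚ × ℚ | 0*v.1 + 1*v.2 ≥ 0} := by
    rw [hS]
    exact convexHull_min himg (halfplane_convex 0 1 0)
  have hmem : ((0:ℚ), (-1/2:ℚ)) ∈ PdSet := by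
    simp only [PdSet, Set.mem_setOf_eq]
    norm_num
  have := hsub hmem
  simp only [Set.mem_setOf_eq] at this
  norm_num at this

lemma smul_mem_iff (k : ℕ) (x y : ℤ) :
    ((x:ℚ), (y:ℚ)) ∈ (k:ℚ) • PdSet ↔ cons (k:ℤ) (x, y) := by
  rcases Nat.eq_zero_or_pos k with rfl | hk
  · simp only [Nat.cast_zero]
    rw [Set.zero_smul_set ⟨((0:ℚ),(0:ℚ)), by simp [PdSet]⟩]
    have hc : cons 0 (x, y) ↔ x = 0 ∧ y = 0 := by rw [cons]; omega
    rw [hc, Set.mem_zero, Prod.ext_iff]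
    simp [Int.cast_eq_zero]
  · have hk0 : (k:ℚ) ≠ 0 := by positivity
    have hkpos : (0:ℚ) < k := by positivity
    rw [Set.mem_smul_set_iff_inv_smul_mem₀ hk0]
    have heq : (k:ℚ)⁻¹ • (((x:ℚ)), (y:ℚ)) = ((x/k : ℚ), (y/k : ℚ)) := by
      rw [Prod.ext_iff]
      constructor <;> simp [smul_eq_mul] <;> ring
    rw [heq]
    simp only [PdSet, Set.mem_setOf_eq, cons]
    have e1 : 3*((x:ℚ)/k)+2*((y:ℚ)/k) = (3*x+2*y)/k := by ring
    have e2 : -((x:ℚ)/k)+2*((y:ℚ)/k) = (-x+2*y)/k := by ring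
    have e3 : -((x:ℚ)/k)-2*((y:ℚ)/k) = (-x-2*y)/k := by ring
    rw [e1, e2, e3, ge_iff_le, ge_iff_le, ge_iff_le, le_div_iff₀ hkpos, le_div_iff₀ hkpos,
      le_div_iff₀ hkpos]
    constructor
    · rintro ⟨h1, h2, h3⟩
      refine ⟨?_, ?_, ?_⟩ <;> [skip; skip; skip]
      · have : (-(k:ℚ)) ≤ 3*(x:ℚ)+2*(y:ℚ) := by linarith
        exact_mod_cast this
      · have : (-(k:ℚ)) ≤ -(x:ℚ)+2*(y:ℚ) := by linarith
        exact_mod_cast this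
      · have : (-(k:ℚ)) ≤ -(x:ℚ)-2*(y:ℚ) := by linarith
        exact_mod_cast this
    · rintro ⟨h1, h2, h3⟩
      have c1 : (-(k:ℚ)) ≤ 3*(x:ℚ)+2*(y:ℚ) := by exact_mod_cast h1
      have c2 : (-(k:ℚ)) ≤ -(x:ℚ)+2*(y:ℚ) := by exact_mod_cast h2
      have c3 : (-(k:ℚ)) ≤ -(x:ℚ)-2*(y:ℚ) := by exact_mod_cast h3
      refine ⟨by linarith, by linarith, by linarith⟩

end Geometry

/-- The dual P* of the triangle P = conv{(3,2),(-1,2),(-1,-2)} has denominator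
2 (2P* is a lattice polytope but P* is not), and its Ehrhart quasi-polynomial
is the honest polynomial k² + k + 1. -/
theorem stmt17 :
    let P : Set (ℚ × ℚ) := convexHull ℚ {((3 : ℚ), (2 : ℚ)), (-1, 2), (-1, -2)}
    let Pd : Set (ℚ × ℚ) := {u | ∀ v ∈ P, u.1 * v.1 + u.2 * v.2 ≥ -1}
    IsLatticePolytope ((2 : ℚ) • Pd) ∧ ¬ IsLatticePolytope Pd ∧
      ∀ k : ℕ,
        (Set.ncard {p : ℤ × ℤ | ((p.1 : ℚ), (p.2 : ℚ)) ∈ (k : ℚ) • Pd} : ℚ) =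
          k ^ 2 + k + 1 := by
  intro P Pd
  have hPd : Pd = PdSet := Pd_eq
  refine ⟨?_, ?_, ?_⟩
  · refine ⟨({(0,-1), (-2,2), (2,0)} : Finset (ℤ × ℤ)), ?_⟩
    rw [hPd, two_smul_Pd]
    congr 1
    simp [Finset.coe_insert, Set.image_insert_eq]
  · rw [hPd]; exact not_lattice_Pd
  · intro k
    have hset : {p : ℤ × ℤ | ((p.1 : ℚ), (p.2 : ℚ)) ∈ (k : ℚ) • Pd} = ↑(F k) := by
      ext p
      rw [Set.mem_setOf_eq, Finset.mem_coe, mem_F, hPd]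
      exact smul_mem_iff k p.1 p.2
    rw [hset, Set.ncard_coe_finset, card_F]
    push_cast
    ring
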